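/- arXiv:1702.06684 — 4 statements merged into one kernel-verified Lean document; each statement's English description precedes it below -/
import Mathlib

section
/- If w = 2v is a word over {1,2} (i.e., w is v with a 2 prepended), then f_w = (r(v)+1)·f_v, where r(v) is the sum of the letters of v. -/
/-- The list of words covered by `w` in the Young-Fibonacci lattice. -/
def preds : List ℕ → List (List ℕ)
  | [] => []
  | 1 :: t => [t]
  | 2 :: t => (1 :: t) :: (preds t).map (fun u => 2 :: u)
  | _ :: _ => []

theorem preds_sum_lt : ∀ (w u : List ℕ), u ∈ preds w → u.sum < w.sum := by
  intro w
  induction w using preds.induct with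
  | case1 => intro u h; simp [preds] at h
  | case2 t => intro u h; simp [preds] at h; subst h; simp
  | case3 t ih =>
      intro u h
      simp [preds] at h
      rcases h with h | ⟨v, hv, rfl⟩
      · subst h; simp
      · have := ih v hv; simpa using by omega
  | case4 x t h1 h2 => intro u h; simp [preds] at h

/-- The number of saturated chains from the empty word to `w`. -/
def f (w : List ℕ) : ℕ :=
  if w = [] then 1
  else ((preds w).attach.map (fun u => f u.1)).sum
termination_by w.sum
decreasing_by exact preds_sum_lt w u.1 u.2

/-- The product formula. -/
def fprod (w : List ℕ) : ℕ :=
  ∏ i ∈ Finset.univ.filter (fun i : Fin w.length => w.get i = 2), ((w.drop i.1).sum - 1)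

lemma f_eq (w : List ℕ) (hw : w ≠ []) : f w = ((preds w).map f).sum := by
  rw [f]; simp [hw]

lemma preds_sum_eq : ∀ (w u : List ℕ), (∀ x ∈ w, x = 1 ∨ x = 2) → u ∈ preds w →
    u.sum + 1 = w.sum := by
  intro w
  induction w using preds.induct with
  | case1 => intro u _ h; simp [preds] at h
  | case2 t => intro u _ h; simp [preds] at h; subst h; simp; omega
  | case3 t ih =>
      intro u hw h
      simp [preds] at h
      rcases h with h | ⟨v, hv, rfl⟩
      · subst h; simp; omega
      · have := ih v (fun x hx => hw x (by simp [hx])) hv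
        simp; omega
  | case4 x t h1 h2 =>
      intro u hw h
      rcases hw x (by simp) with rfl | rfl
      · exact absurd rfl h1
      · exact absurd rfl h2

lemma preds_mem : ∀ (w u : List ℕ), (∀ x ∈ w, x = 1 ∨ x = 2) → u ∈ preds w →
    ∀ x ∈ u, x = 1 ∨ x = 2 := by
  intro w
  induction w using preds.induct with
  | case1 => intro u _ h; simp [preds] at h
  | case2 t =>
      intro u hw h; simp [preds] at h; subst h
      exact fun x hx => hw x (by simp [hx])
  | case3 t ih =>
      intro u hw h
      simp [preds] at h
      rcases h with h | ⟨v, hv, rfl⟩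
      · subst h
        intro x hx
        rcases List.mem_cons.1 hx with rfl | hx
        · left; rfl
        · exact hw x (by simp [hx])
      · intro x hx
        rcases List.mem_cons.1 hx with rfl | hx
        · right; rfl
        · exact ih v (fun y hy => hw y (by simp [hy])) hv x hx
  | case4 x t h1 h2 =>
      intro u hw h
      rcases hw x (by simp) with rfl | rfl
      · exact absurd rfl h1
      · exact absurd rfl h2

/-- `f (2 :: v) = (r(v)+1) * f v`. -/
theorem f_two_cons (v : List ℕ) (hv : ∀ x ∈ v, x = 1 ∨ x = 2) :
    f (2 :: v) = (v.sum + 1) * f v := by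
  generalize hn : v.sum = n
  induction n using Nat.strong_induction_on generalizing v with
  | _ n ih =>
  subst hn
  rw [f_eq (2 :: v) (by simp)]
  show f (1 :: v) + ((preds v).map (fun u => 2 :: u) |>.map f).sum = _
  have h1 : f (1 :: v) = f v := by
    rw [f_eq (1 :: v) (by simp)]; simp [preds]
  rw [h1, List.map_map]
  have h2 : ((preds v).map (f ∘ fun u => 2 :: u)).sum
      = ((preds v).map (fun u => v.sum * f u)).sum := by
    congr 1
    apply List.map_congr_left
    intro u hu
    have hsum := preds_sum_eq v u hv hu
    have := ih u.sum (by omega) u (preds_mem v u hv hu) rfl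
    simp only [Function.comp]
    rw [this, hsum]
  rw [h2, List.sum_map_mul_left]
  rcases eq_or_ne v [] with rfl | hne
  · simp [preds]
  · rw [← f_eq v hne]; ring
end

section
/- The subgraph induced in the Hasse diagram of the Young-Fibonacci lattice by words w with f_w odd is a tree (connected and acyclic), in which every node of even rank has exactly one child and every node of odd rank has exactly two children. -/
theorem sum_of_mem_preds : ∀ (w u : List ℕ), u ∈ preds w → u.sum + 1 = w.sum := by
  intro w
  induction w using preds.induct with
  | case1 => intro u h; simp [preds] at h
  | case2 t => intro u h; simp [preds] at h; subst h; simp; omega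
  | case3 t ih =>
      intro u h
      simp [preds] at h
      rcases h with h | ⟨v, hv, rfl⟩
      · subst h; simp; omega
      · have := ih v hv; simp; omega
  | case4 x t h1 h2 => intro u h; simp [preds] at h

theorem mem_12_of_mem_preds : ∀ (w u : List ℕ), u ∈ preds w →
    (∀ x ∈ w, x = 1 ∨ x = 2) → ∀ x ∈ u, x = 1 ∨ x = 2 := by
  intro w
  induction w using preds.induct with
  | case1 => intro u h; simp [preds] at h
  | case2 t => intro u h hw; simp [preds] at h; subst h
               exact fun x hx => hw x (List.mem_cons_of_mem _ hx)
  | case3 t ih =>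
      intro u h hw
      simp [preds] at h
      rcases h with h | ⟨v, hv, rfl⟩
      · subst h
        intro x hx
        rcases List.mem_cons.mp hx with rfl | hx
        · left; rfl
        · exact hw x (List.mem_cons_of_mem _ hx)
      · intro x hx
        rcases List.mem_cons.mp hx with rfl | hx
        · right; rfl
        · exact ih v hv (fun y hy => hw y (List.mem_cons_of_mem _ hy)) x hx
  | case4 x t h1 h2 => intro u h; simp [preds] at h

theorem f_nil : f [] = 1 := by rw [f]; rfl

theorem f_eq_sum (w : List ℕ) (h : w ≠ []) : f w = ((preds w).map f).sum := by
  rw [f]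
  simp only [h, if_false]
  congr 1
  exact List.attach_map_val  -- guess; fix if wrong

theorem f_one (t : List ℕ) : f (1 :: t) = f t := by
  rw [f_eq_sum _ (by simp)]
  simp [preds]

theorem f_two : ∀ (t : List ℕ), f (2 :: t) = (t.sum + 1) * f t := by
  have H : ∀ n (t : List ℕ), t.sum = n → f (2 :: t) = (t.sum + 1) * f t := by
    intro n
    induction n using Nat.strong_induction_on with
    | _ n ih =>
      intro t ht
      rw [f_eq_sum _ (by simp)]
      show ((preds (2 :: t)).map f).sum = _
      have hpr : preds (2 :: t) = (1 :: t) :: (preds t).map (fun u => 2 :: u) := rfl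
      rw [hpr]
      rw [List.map_cons, List.sum_cons, List.map_map]
      have hmap : ((preds t).map (f ∘ fun u => 2 :: u)) = (preds t).map (fun u => t.sum * f u) := by
        apply List.map_congr_left
        intro u hu
        have h1 : u.sum < n := ht ▸ preds_sum_lt t u hu
        have h2 : u.sum + 1 = t.sum := sum_of_mem_preds t u hu
        simp only [Function.comp]
        rw [ih u.sum h1 u rfl, h2]
      rw [hmap, f_one]
      by_cases hnil : t = []
      · subst hnil; simp [preds, f_nil]
      · have : ((preds t).map (fun u => t.sum * f u)).sum = t.sum * ((preds t).map f).sum := by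
          rw [← List.sum_map_mul_left]
        rw [this, ← f_eq_sum t hnil]
        ring
  intro t; exact H t.sum t rfl

def good : List ℕ → Prop
  | [] => True
  | 1 :: t => good t
  | 2 :: t => Even t.sum ∧ good t
  | _ :: _ => False

theorem odd_f_iff : ∀ (w : List ℕ), Odd (f w) ↔ good w := by
  intro w
  induction w using good.induct with
  | case1 => simp [f_nil, good]
  | case2 t ih => rw [f_one]; exact ih.trans (by rw [show good (1::t) = good t from rfl])
  | case3 t ih =>
      rw [f_two, Nat.odd_mul]
      show _ ↔ (Even t.sum ∧ good t)
      rw [Nat.odd_add_one, Nat.not_odd_iff_even, ih]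
  | case4 x t h1 h2 =>
      have hp : preds (x :: t) = [] := by
        rcases x with _ | _ | _ | x
        · rfl
        · exact absurd rfl h1
        · exact absurd rfl h2
        · rfl
      rw [f_eq_sum _ (by simp), hp]
      simp only [List.map_nil, List.sum_nil]
      constructor
      · intro h; exact absurd h (by decide)
      · intro h
        exfalso
        rcases x with _ | _ | _ | x
        · exact h
        · exact h1 rfl
        · exact h2 rfl
        · exact h

theorem even_not_odd_nat {n : ℕ} (h : Even n) (h' : Odd n) : False := by
  rcases h with ⟨k, hk⟩; rcases h' with ⟨j, hj⟩; omega

theorem child_cases {w v : List ℕ} (hm : w ∈ preds v) (hw : good w) (hv : good v) :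
    v = 1 :: w ∨ (Odd w.sum ∧ v = 2 :: w.tail ∧ w = 1 :: w.tail) := by
  induction v using preds.induct with
  | case1 => simp [preds] at hm
  | case2 t => simp [preds] at hm; subst hm; exact Or.inl rfl
  | case3 t _ =>
      have hv' : Even t.sum ∧ good t := hv
      simp [preds] at hm
      rcases hm with hm | ⟨u, hu, rfl⟩
      · subst hm
        right
        refine ⟨?_, rfl, rfl⟩
        simp only [List.sum_cons]
        rcases hv'.1 with ⟨k, hk⟩
        exact ⟨k, by omega⟩
      · exfalso
        have hwu : Even u.sum ∧ good u := hw
        have := sum_of_mem_preds t u hu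
        rcases hv'.1 with ⟨k, hk⟩; rcases hwu.1 with ⟨j, hj⟩; omega
  | case4 x t h1 h2 => simp [preds] at hm

def par : List ℕ → List ℕ
  | 1 :: t => t
  | 2 :: t => 1 :: t
  | _ => []

theorem parent_mem {v : List ℕ} (hv : good v) (hne : v ≠ []) :
    par v ∈ preds v ∧ good (par v) := by
  induction v using preds.induct with
  | case1 => exact absurd rfl hne
  | case2 t => exact ⟨by simp [preds, par], hv⟩
  | case3 t _ =>
      have hv' : Even t.sum ∧ good t := hv
      exact ⟨by simp [preds, par], hv'.2⟩
  | case4 x t h1 h2 =>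
      exfalso
      rcases x with _ | _ | _ | x
      · exact hv
      · exact h1 rfl
      · exact h2 rfl
      · exact hv

theorem parent_eq {v u : List ℕ} (hv : good v) (hm : u ∈ preds v) (hu : good u) :
    u = par v := by
  induction v using preds.induct with
  | case1 => simp [preds] at hm
  | case2 t => simp [preds] at hm; subst hm; rfl
  | case3 t _ =>
      have hv' : Even t.sum ∧ good t := hv
      simp [preds] at hm
      rcases hm with hm | ⟨s, hs, rfl⟩
      · subst hm; rfl
      · exfalso
        have hus : Even s.sum ∧ good s := hu
        have := sum_of_mem_preds t s hs
        rcases hv'.1 with ⟨k, hk⟩; rcases hus.1 with ⟨j, hj⟩; omega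
  | case4 x t h1 h2 => simp [preds] at hm

theorem par_mem_12 {v : List ℕ} (hv : ∀ x ∈ v, x = 1 ∨ x = 2) :
    ∀ x ∈ par v, x = 1 ∨ x = 2 := by
  induction v using preds.induct with
  | case1 => simp [par]
  | case2 t => exact fun x hx => hv x (List.mem_cons_of_mem _ hx)
  | case3 t _ =>
      intro x hx
      rcases List.mem_cons.mp hx with rfl | hx
      · left; rfl
      · exact hv x (List.mem_cons_of_mem _ hx)
  | case4 x t h1 h2 =>
      rcases x with _ | _ | _ | x
      · simp [par]
      · exact absurd rfl h1
      · exact absurd rfl h2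
      · simp [par]

/-- Vertices: words over `{1,2}` with odd `f`. -/
def OddWord : Type := {w : List ℕ // (∀ x ∈ w, x = 1 ∨ x = 2) ∧ Odd (f w)}

/-- The subgraph of the Hasse diagram of the Young-Fibonacci lattice induced by odd words. -/
def macdonaldGraph : SimpleGraph OddWord where
  Adj v w := v.1 ∈ preds w.1 ∨ w.1 ∈ preds v.1
  symm := ⟨by intro v w h; tauto⟩
  loopless := ⟨by
    intro v h
    rcases h with h | h <;> exact absurd (preds_sum_lt _ _ h) (lt_irrefl _)⟩

theorem oddword_good (v : OddWord) : good v.1 := (odd_f_iff v.1).mp v.2.2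

def root : OddWord := ⟨[], by simp, by rw [f_nil]; exact odd_one⟩

instance : Nonempty OddWord := ⟨⟨[], by simp, by rw [f_nil]; exact odd_one⟩⟩

instance : DecidableEq OddWord := fun a b =>
  decidable_of_iff (a.1 = b.1) Subtype.ext_iff.symm

theorem reachable_root : ∀ (v : OddWord), macdonaldGraph.Reachable root v := by
  have H : ∀ n (v : OddWord), v.1.sum = n → macdonaldGraph.Reachable root v := by
    intro n
    induction n using Nat.strong_induction_on with
    | _ n ih =>
      intro v hv
      by_cases hnil : v.1 = []
      · have : v = root := Subtype.ext hnil
        rw [this]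
      · obtain ⟨hmem, hgood⟩ := parent_mem (oddword_good v) hnil
        set P : OddWord := ⟨par v.1, par_mem_12 v.2.1, (odd_f_iff _).mpr hgood⟩ with hP
        have hadj : macdonaldGraph.Adj P v := Or.inl hmem
        have hlt : (par v.1).sum < n := hv ▸ preds_sum_lt v.1 (par v.1) hmem
        exact (ih _ hlt P rfl).trans hadj.reachable
  intro v; exact H v.1.sum v rfl

theorem first_edge_mem {V : Type*} {G : SimpleGraph V} {u v : V} (w : G.Walk u v)
    (hw : ¬ w.Nil) : s(u, w.getVert 1) ∈ w.edges := by
  cases w with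
  | nil => simp at hw
  | cons h p =>
    rw [SimpleGraph.Walk.getVert_cons_succ, SimpleGraph.Walk.getVert_zero,
      SimpleGraph.Walk.edges_cons]
    exact List.mem_cons_self

theorem connected_macdonald : macdonaldGraph.Connected :=
  ⟨fun a b => (reachable_root a).symm.trans (reachable_root b)⟩

theorem list_exists_max {α : Type*} (g : α → ℕ) :
    ∀ (l : List α), l ≠ [] → ∃ m ∈ l, ∀ x ∈ l, g x ≤ g m := by
  intro l
  induction l with
  | nil => simp
  | cons a l ih =>
    intro _
    by_cases hl : l = []
    · subst hl; exact ⟨a, by simp⟩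
    · obtain ⟨m, hm, hmax⟩ := ih hl
      rcases le_or_gt (g a) (g m) with h | h
      · refine ⟨m, List.mem_cons_of_mem _ hm, ?_⟩
        intro x hx
        rcases List.mem_cons.mp hx with rfl | hx
        · exact h
        · exact hmax x hx
      · refine ⟨a, List.mem_cons_self, ?_⟩
        intro x hx
        rcases List.mem_cons.mp hx with rfl | hx
        · exact le_refl _
        · exact (hmax x hx).trans h.le

theorem acyclic_macdonald : macdonaldGraph.IsAcyclic := by
  intro v c hc
  obtain ⟨m, hmem, hmax⟩ := list_exists_max (fun x : OddWord => x.1.sum) c.support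
    c.support_ne_nil
  obtain ⟨q, hq, hqmax⟩ : ∃ q : macdonaldGraph.Walk m m, q.IsCycle ∧
      ∀ x ∈ q.support, x.1.sum ≤ m.1.sum := by
    refine ⟨c.rotate m hmem, hc.rotate hmem, ?_⟩
    intro x hx
    rcases (SimpleGraph.Walk.mem_support_iff _).mp hx with rfl | hx
    · exact le_refl _
    · exact hmax x (List.mem_of_mem_tail
        (((SimpleGraph.Walk.support_rotate c m hmem).mem_iff).mp hx))
  clear hc hmem hmax c
  have hlen := hq.three_le_length
  cases q with
  | nil => exact SimpleGraph.Walk.IsCycle.not_of_nil hq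
  | @cons _ a _ h p =>
    obtain ⟨hp, he⟩ := (SimpleGraph.Walk.cons_isCycle_iff p h).mp hq
    rw [SimpleGraph.Walk.length_cons] at hlen
    have hpnn : ¬ p.Nil := by
      rw [SimpleGraph.Walk.not_nil_iff_lt_length]; omega
    have hrnn : ¬ p.reverse.Nil := by
      rw [SimpleGraph.Walk.not_nil_iff_lt_length, SimpleGraph.Walk.length_reverse]; omega
    obtain ⟨b, hbdef⟩ : ∃ x, p.reverse.getVert 1 = x := ⟨_, rfl⟩
    have hadjb : macdonaldGraph.Adj m b := hbdef ▸ SimpleGraph.Walk.adj_snd hrnn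
    have hedge : s(m, b) ∈ p.edges := by
      have h1 := first_edge_mem p.reverse hrnn
      rw [hbdef, SimpleGraph.Walk.edges_reverse, List.mem_reverse] at h1
      exact h1
    have hbsup : b ∈ p.support := by
      have : b ∈ p.reverse.support :=
        SimpleGraph.Walk.mem_support_iff_exists_getVert.mpr
          ⟨1, hbdef, by rw [SimpleGraph.Walk.length_reverse]; omega⟩
      rwa [SimpleGraph.Walk.support_reverse, List.mem_reverse] at this
    have hab : a ≠ b := by
      intro hab
      subst hab
      exact he hedge
    -- both a and b are parents of m
    have hmax' : ∀ x ∈ p.support, x.1.sum ≤ m.1.sum := by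
      intro x hx
      exact hqmax x (by rw [SimpleGraph.Walk.support_cons]; exact List.mem_cons_of_mem _ hx)
    have hparent : ∀ x : OddWord, macdonaldGraph.Adj m x → x.1.sum ≤ m.1.sum →
        x.1 = par m.1 := by
      intro x hadj hle
      rcases hadj with hx | hx
      · exact absurd (preds_sum_lt _ _ hx) (by omega)
      · exact parent_eq (oddword_good m) hx (oddword_good x)
    have ha : a.1 = par m.1 :=
      hparent a h (hmax' a p.start_mem_support)
    have hb : b.1 = par m.1 := hparent b hadjb (hmax' b hbsup)
    exact hab (Subtype.ext (ha.trans hb.symm))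

theorem good_odd_head {w : List ℕ} (hg : good w) (ho : Odd w.sum) : w = 1 :: w.tail := by
  induction w using preds.induct with
  | case1 => rcases ho with ⟨k, hk⟩; simp at hk
  | case2 t => rfl
  | case3 t _ =>
      exfalso
      have hg' : Even t.sum ∧ good t := hg
      rcases hg'.1 with ⟨k, hk⟩; rcases ho with ⟨j, hj⟩; simp at hj; omega
  | case4 x t h1 h2 =>
      exfalso
      rcases x with _ | _ | _ | x
      · exact hg
      · exact h1 rfl
      · exact h2 rfl
      · exact hg

theorem counting (w : OddWord) :
    (Even w.1.sum → {v : OddWord | w.1 ∈ preds v.1}.ncard = 1) ∧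
    (Odd w.1.sum → {v : OddWord | w.1 ∈ preds v.1}.ncard = 2) := by
  have hgw := oddword_good w
  have hmem1 : ∀ x ∈ (1 : ℕ) :: w.1, x = 1 ∨ x = 2 := by
    intro x hx
    rcases List.mem_cons.mp hx with rfl | hx
    · exact Or.inl rfl
    · exact w.2.1 x hx
  have hgood1 : good (1 :: w.1) := hgw
  set c1 : OddWord := ⟨1 :: w.1, hmem1, (odd_f_iff _).mpr hgood1⟩ with hc1
  constructor
  · intro heven
    have : {v : OddWord | w.1 ∈ preds v.1} = {c1} := by
      ext v
      simp only [Set.mem_setOf_eq, Set.mem_singleton_iff]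
      constructor
      · intro hv
        rcases child_cases hv hgw (oddword_good v) with h | ⟨hodd, _, _⟩
        · exact Subtype.ext h
        · exfalso; rcases heven with ⟨k, hk⟩; rcases hodd with ⟨j, hj⟩; omega
      · rintro rfl
        show w.1 ∈ preds (1 :: w.1)
        simp [preds]
    rw [this, Set.ncard_singleton]
  · intro hodd
    have hw1 : w.1 = 1 :: w.1.tail := good_odd_head hgw hodd
    have htsum : Even w.1.tail.sum := by
      rcases hodd with ⟨j, hj⟩
      rw [hw1] at hj; simp at hj
      exact ⟨j, by omega⟩
    have hgt : good w.1.tail := by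
      have : good (1 :: w.1.tail) := hw1 ▸ hgw
      exact this
    have hmem2 : ∀ x ∈ (2 : ℕ) :: w.1.tail, x = 1 ∨ x = 2 := by
      intro x hx
      rcases List.mem_cons.mp hx with rfl | hx
      · exact Or.inr rfl
      · exact w.2.1 x (List.mem_of_mem_tail hx)
    have hgood2 : good (2 :: w.1.tail) := ⟨htsum, hgt⟩
    set c2 : OddWord := ⟨2 :: w.1.tail, hmem2, (odd_f_iff _).mpr hgood2⟩ with hc2
    have hne : c1 ≠ c2 := by
      intro h
      have := congrArg (fun v : OddWord => v.1) h
      simp [hc1, hc2] at this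
    have : {v : OddWord | w.1 ∈ preds v.1} = {c1, c2} := by
      ext v
      simp only [Set.mem_setOf_eq, Set.mem_insert_iff, Set.mem_singleton_iff]
      constructor
      · intro hv
        rcases child_cases hv hgw (oddword_good v) with h | ⟨_, h, _⟩
        · exact Or.inl (Subtype.ext h)
        · exact Or.inr (Subtype.ext h)
      · rintro (rfl | rfl)
        · show w.1 ∈ preds (1 :: w.1)
          simp [preds]
        · show w.1 ∈ preds (2 :: w.1.tail)
          rw [show preds (2 :: w.1.tail) =
            (1 :: w.1.tail) :: (preds w.1.tail).map (fun u => 2 :: u) from rfl]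
          rw [← hw1]
          exact List.mem_cons_self
    rw [this, Set.ncard_pair hne]


/-- this induced subgraph is a tree; each node of even rank has exactly
one child, and each node of odd rank has exactly two children. -/
theorem macdonald_graph_is_tree :
    macdonaldGraph.IsTree ∧
    (∀ w : OddWord,
      (Even w.1.sum → {v : OddWord | w.1 ∈ preds v.1}.ncard = 1) ∧
      (Odd w.1.sum → {v : OddWord | w.1 ∈ preds v.1}.ncard = 2)) :=
  ⟨⟨connected_macdonald, acyclic_macdonald⟩, counting⟩
end

section
/- For every k ≥ 1 and every n ≥ 2^{k−1} + 2, the multiset {f_w mod 2^k : w a word over {1,2} of rank n with f_w odd} is equidistributed over the odd residue classes modulo 2^k; that is, each odd residue class mod 2^k occurs exactly 2^{⌊n/2⌋}/2^{k−1} times. -/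

lemma fprod_nil : fprod [] = 1 := by simp [fprod]

lemma fprod_cons (x : ℕ) (w : List ℕ) :
    fprod (x :: w) = (if x = 2 then x + w.sum - 1 else 1) * fprod w := by
  unfold fprod
  rw [Finset.prod_filter, Finset.prod_filter]
  show (∏ a : Fin (w.length + 1),
      if (x :: w).get a = 2 then ((x :: w).drop a.1).sum - 1 else 1) = _
  rw [Fin.prod_univ_succ]
  simp

lemma fprod_one_cons (w : List ℕ) : fprod (1 :: w) = fprod w := by
  simp [fprod_cons]

lemma fprod_two_cons (w : List ℕ) : fprod (2 :: w) = (w.sum + 1) * fprod w := by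
  rw [fprod_cons]
  have : 2 + w.sum - 1 = w.sum + 1 := by omega
  simp [this]


def S : ℕ → Multiset ℕ
  | 0 => {1}
  | m + 1 => S m + (S m).map (fun x => x * (2 * m + 1))

lemma S_card (m : ℕ) : Multiset.card (S m) = 2 ^ m := by
  induction m with
  | zero => simp [S]
  | succ m ih => simp [S, ih]; ring

lemma S_odd : ∀ m, ∀ x ∈ S m, x % 2 = 1 := by
  intro m
  induction m with
  | zero => intro x hx; simp [S] at hx; omega
  | succ m ih =>
      intro x hx
      rw [S] at hx
      rcases Multiset.mem_add.1 hx with h | h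
      · exact ih x h
      · obtain ⟨y, hy, rfl⟩ := Multiset.mem_map.1 h
        rw [Nat.mul_mod, ih y hy]
        omega

/-- invariance of `S m` mod `M` under multiplication by an involutive unit `2*j+1`. -/
lemma S_inv (M j : ℕ) (hq : ∀ x : ℕ, x * (2 * j + 1) * (2 * j + 1) % M = x % M) :
    ∀ m, j < m →
      (S m).map (fun x => x * (2 * j + 1) % M) = (S m).map (fun x => x % M) := by
  intro m
  induction m with
  | zero => omega
  | succ m ih =>
      intro hm
      rcases Nat.lt_or_ge j m with hjm | hjm
      · -- inductive step
        have ihm := ih hjm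
        have e1 : ((fun x => x * (2 * j + 1) % M) ∘ fun x => x * (2 * m + 1)) =
            (fun r => r * (2 * m + 1) % M) ∘ (fun x => x * (2 * j + 1) % M) := by
          funext x
          simp only [Function.comp]
          rw [Nat.mod_mul_mod]
          ring_nf
        have e2 : ((fun x => x % M) ∘ fun x => x * (2 * m + 1)) =
            (fun r => r * (2 * m + 1) % M) ∘ (fun x => x % M) := by
          funext x
          simp only [Function.comp]
          rw [Nat.mod_mul_mod]
        have hcomp : (S m).map ((fun x => x * (2 * j + 1) % M) ∘ fun x => x * (2 * m + 1)) =
            (S m).map ((fun x => x % M) ∘ fun x => x * (2 * m + 1)) := by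
          rw [e1, e2, ← Multiset.map_map, ← Multiset.map_map, ihm]
        rw [S, Multiset.map_add, Multiset.map_add, Multiset.map_map, Multiset.map_map,
          hcomp, ihm]
      · -- base case: j = m
        have hjm' : j = m := by omega
        subst hjm'
        rw [S, Multiset.map_add, Multiset.map_add, Multiset.map_map, Multiset.map_map]
        have e1 : ((fun x => x * (2 * j + 1) % M) ∘ fun x => x * (2 * j + 1)) =
            (fun x : ℕ => x % M) := by
          funext x
          simp only [Function.comp]
          rw [hq]
        have e2 : ((fun x => x % M) ∘ fun x => x * (2 * j + 1)) =
            (fun x => x * (2 * j + 1) % M) := by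
          funext x; simp [Function.comp]
        rw [e1, e2]
        exact add_comm _ _


def W : ℕ → Finset (List ℕ)
  | 0 => {[]}
  | 1 => {[1]}
  | n + 2 =>
    Finset.disjUnion
      ((W (n + 1)).map ⟨fun t => 1 :: t, fun a b h => by simpa using h⟩)
      ((W n).map ⟨fun t => 2 :: t, fun a b h => by simpa using h⟩)
      (by
        simp only [Finset.disjoint_left, Finset.mem_map, Function.Embedding.coeFn_mk]
        rintro a ⟨x, hx, rfl⟩ ⟨y, hy, hxy⟩
        change 2 :: y = 1 :: x at hxy
        simp at hxy)

lemma sum_zero_nil (w : List ℕ) (h : ∀ x ∈ w, x = 1 ∨ x = 2) (hs : w.sum = 0) : w = [] := by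
  cases w with
  | nil => rfl
  | cons x t =>
      have := h x (by simp)
      simp [List.sum_cons] at hs
      omega

lemma mem_W : ∀ n w, w ∈ W n ↔ (∀ x ∈ w, x = 1 ∨ x = 2) ∧ w.sum = n := by
  intro n
  induction n using W.induct with
  | case1 =>
      intro w
      simp only [W, Finset.mem_singleton]
      constructor
      · rintro rfl; simp
      · rintro ⟨h1, h2⟩; exact sum_zero_nil w h1 h2
  | case2 =>
      intro w
      simp only [W, Finset.mem_singleton]
      constructor
      · rintro rfl; simp
      · rintro ⟨h1, h2⟩
        cases w with
        | nil => simp at h2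
        | cons x t =>
            have hx := h1 x (by simp)
            simp [List.sum_cons] at h2
            have hx1 : x = 1 := by omega
            subst hx1
            have : t = [] := sum_zero_nil t (fun y hy => h1 y (by simp [hy])) (by omega)
            simp [this]
  | case3 n ih1 ih2 =>
      intro w
      simp only [W, Finset.mem_disjUnion, Finset.mem_map, Function.Embedding.coeFn_mk]
      constructor
      · rintro (⟨u, hu, rfl⟩ | ⟨u, hu, rfl⟩)
        · obtain ⟨h1, h2⟩ := (ih1 u).1 hu
          refine ⟨?_, by show (1 :: u).sum = _; simp [List.sum_cons, h2]; try omega⟩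
          intro x hx
          rcases List.mem_cons.1 hx with rfl | hx
          · left; rfl
          · exact h1 x hx
        · obtain ⟨h1, h2⟩ := (ih2 u).1 hu
          refine ⟨?_, by show (2 :: u).sum = _; simp [List.sum_cons, h2]; try omega⟩
          intro x hx
          rcases List.mem_cons.1 hx with rfl | hx
          · right; rfl
          · exact h1 x hx
      · rintro ⟨h1, h2⟩
        cases w with
        | nil => simp at h2
        | cons x t =>
            have ht1 : ∀ y ∈ t, y = 1 ∨ y = 2 := fun y hy => h1 y (by simp [hy])
            simp [List.sum_cons] at h2
            rcases h1 x (by simp) with rfl | rfl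
            · exact Or.inl ⟨t, (ih1 t).2 ⟨ht1, by omega⟩, rfl⟩
            · exact Or.inr ⟨t, (ih2 t).2 ⟨ht1, by omega⟩, rfl⟩


def Mval (n : ℕ) : Multiset ℕ :=
  ((W n).val.filter (fun w => fprod w % 2 = 1)).map fprod

lemma Mval_eq : ∀ n, Mval n = S (n / 2) := by
  intro n
  induction n using W.induct with
  | case1 =>
      show Mval 0 = S 0
      rw [Mval]
      show Multiset.map fprod (Multiset.filter _ {[]}) = _
      rw [Multiset.filter_singleton]
      simp [fprod_nil, S]
  | case2 =>
      show Mval 1 = S 0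
      rw [Mval]
      show Multiset.map fprod (Multiset.filter _ {[1]}) = _
      have h1 : fprod [1] = 1 := by rw [fprod_one_cons, fprod_nil]
      rw [Multiset.filter_singleton]
      simp [h1, S]
  | case3 n ih1 ih2 =>
      have hval : (W (n + 2)).val =
          (W (n + 1)).val.map (fun t => 1 :: t) + (W n).val.map (fun t => 2 :: t) := by
        show (Finset.disjUnion _ _ _).val = _
        rw [Finset.disjUnion]
        simp [Finset.map_val]
        rfl
      have h1 : Multiset.map fprod
          (Multiset.filter (fun w => fprod w % 2 = 1)
            ((W (n+1)).val.map (fun t => 1 :: t))) = Mval (n + 1) := by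
        rw [Multiset.filter_map, Multiset.map_map]
        unfold Mval
        congr 1
        · funext w; simp [Function.comp, fprod_one_cons]
        · apply Multiset.filter_congr; intro w _; simp [Function.comp, fprod_one_cons]
      have h2 : Multiset.map fprod
          (Multiset.filter (fun w => fprod w % 2 = 1)
            ((W n).val.map (fun t => 2 :: t))) =
          Multiset.map (fun x => (n + 1) * x)
            (Multiset.filter (fun x => (n + 1) * x % 2 = 1) (Mval n)) := by
        rw [Multiset.filter_map, Multiset.map_map]
        unfold Mval
        rw [Multiset.filter_map, Multiset.map_map, Multiset.filter_filter]
        have hfil : Multiset.filter ((fun w => fprod w % 2 = 1) ∘ fun t => 2 :: t) (W n).val =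
            Multiset.filter
              (fun w => ((fun x => (n + 1) * x % 2 = 1) ∘ fprod) w ∧ fprod w % 2 = 1)
              (W n).val := by
          apply Multiset.filter_congr
          intro w hw
          have hs : w.sum = n := ((mem_W n w).1 hw).2
          simp only [Function.comp, fprod_two_cons, hs]
          constructor
          · intro h
            refine ⟨h, ?_⟩
            rcases Nat.even_or_odd (fprod w) with he | ho
            · exfalso
              obtain ⟨c, hc⟩ := he
              rw [hc] at h
              have : (n + 1) * (c + c) = 2 * ((n + 1) * c) := by ring
              rw [this] at h
              omega
            · exact Nat.odd_iff.1 ho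
          · exact fun h => h.1
        rw [hfil]
        apply Multiset.map_congr rfl
        intro w hw
        have hw' := Multiset.mem_of_mem_filter hw
        have hs : w.sum = n := ((mem_W n w).1 hw').2
        simp [Function.comp, fprod_two_cons, hs]
      have hM : Mval (n + 2) = Mval (n + 1) +
          Multiset.map (fun x => (n + 1) * x)
            (Multiset.filter (fun x => (n + 1) * x % 2 = 1) (Mval n)) := by
        unfold Mval
        rw [show ((n : ℕ) + 2) = n + 2 from rfl]
        rw [hval, Multiset.filter_add, Multiset.map_add]
        rw [h1, h2]
        rfl
      rcases Nat.even_or_odd n with he | ho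
      · have hpar : n % 2 = 0 := Nat.even_iff.1 he
        have hn1 : (n + 1) % 2 = 1 := by omega
        have hodd : ∀ x, (n + 1) * x % 2 = x % 2 := by
          intro x
          rw [Nat.mul_mod, hn1, one_mul, Nat.mod_mod_of_dvd x dvd_rfl]
        have hfil : Multiset.filter (fun x => (n + 1) * x % 2 = 1) (Mval n) = Mval n := by
          rw [Multiset.filter_eq_self]
          intro x hx
          rw [hodd]
          unfold Mval at hx
          obtain ⟨w, hw, rfl⟩ := Multiset.mem_map.1 hx
          exact (Multiset.mem_filter.1 hw).2
        rw [hM, hfil, ih1, ih2]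
        have e1 : (n + 1) / 2 = n / 2 := by omega
        have e2 : (n + 2) / 2 = n / 2 + 1 := by omega
        rw [e1, e2, S]
        congr 1
        apply Multiset.map_congr rfl
        intro x _
        have : 2 * (n / 2) + 1 = n + 1 := by omega
        rw [this, Nat.mul_comm]
      · have hpar : n % 2 = 1 := Nat.odd_iff.1 ho
        have hn1 : (n + 1) % 2 = 0 := by omega
        have hfil : Multiset.filter (fun x => (n + 1) * x % 2 = 1) (Mval n) = 0 := by
          rw [Multiset.filter_eq_nil]
          intro x _
          rw [Nat.mul_mod, hn1, zero_mul]
          omega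
        rw [hM, hfil, ih1]
        simp only [Multiset.map_zero, add_zero]
        congr 1
        omega


lemma countB : ∀ k, 1 ≤ k → ∀ m i, 2 ^ (k - 1) + 1 ≤ 2 * m → i % 2 = 1 → i < 2 ^ k →
    Multiset.countP (fun x => x % 2 ^ k = i) (S m) = 2 ^ (m - (k - 1)) := by
  intro k
  induction k with
  | zero => intro h; omega
  | succ k ih =>
    intro _ m i hm hi hik
    simp only [Nat.add_sub_cancel] at hm ⊢
    rcases Nat.eq_zero_or_pos k with rfl | hk
    · -- base: k + 1 = 1
      have h2 : (2:ℕ) ^ 1 = 2 := by norm_num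
      rw [h2] at hik ⊢
      have hi1 : i = 1 := by omega
      subst hi1
      rw [Multiset.countP_eq_card.2 (fun x hx => S_odd m x hx), S_card]
      simp
    · -- inductive step
      set j := 2 ^ (k - 1) with hj_def
      have hjpos : 0 < j := Nat.pow_pos (by norm_num)
      have hkk : k - 1 + 1 = k := by omega
      have hh : (2:ℕ) ^ k = 2 * j := by
        rw [hj_def, ← pow_succ']
        congr 1
        omega
      set h := 2 ^ k with hh_def
      set M := 2 ^ (k + 1) with hM_def
      have hM : M = 2 * h := by rw [hM_def, hh_def, pow_succ]; ring
      have hM4 : M = 4 * j := by omega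
      have hq : ∀ x : ℕ, x * (2 * j + 1) * (2 * j + 1) % M = x % M := by
        intro x
        have key : x * (2 * j + 1) * (2 * j + 1) = x + (x * (j + 1)) * M := by
          rw [hM4]; ring
        rw [key, Nat.add_mul_mod_self_right]
      have hjm : j < m := by omega
      have hinv := S_inv M j hq m hjm
      have hcnt : ∀ c : ℕ, Multiset.countP (fun x => x % M = c) (S m) =
          Multiset.countP (fun x => x * (2 * j + 1) % M = c) (S m) := by
        intro c
        have hc := congrArg (Multiset.countP (fun y => y = c)) hinv
        rw [Multiset.countP_map, Multiset.countP_map,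
          ← Multiset.countP_eq_card_filter, ← Multiset.countP_eq_card_filter] at hc
        exact hc.symm
      have hx2 : ∀ x ∈ S m, x * (2 * j + 1) % M = (x + h) % M := by
        intro x hx
        have ho := S_odd m x hx
        obtain ⟨y, hy⟩ : ∃ y, x = 2 * y + 1 := ⟨x / 2, by omega⟩
        have key : x * (2 * j + 1) = (x + h) + y * M := by
          subst hy; rw [hM4, hh]; ring
        rw [key, Nat.add_mul_mod_self_right]
      -- arithmetic helpers
      have eadd : ∀ a, a < M → (a + h) % M = if a < h then a + h else a - h := by
        intro a ha
        rcases Nat.lt_or_ge a h with hlt | hge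
        · rw [if_pos hlt]; exact Nat.mod_eq_of_lt (by omega)
        · rw [if_neg (by omega), Nat.mod_eq_sub_mod (by omega)]
          have e : a + h - M = a - h := by omega
          rw [e, Nat.mod_eq_of_lt (by omega)]
      have emod : ∀ a, a < M → a % h = if a < h then a else a - h := by
        intro a ha
        rcases Nat.lt_or_ge a h with hlt | hge
        · rw [if_pos hlt]; exact Nat.mod_eq_of_lt hlt
        · rw [if_neg (by omega), Nat.mod_eq_sub_mod hge, Nat.mod_eq_of_lt (by omega)]
      set i' := (i + h) % M with hi'_def
      have hi'val : i' = if i < h then i + h else i - h := eadd i hik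
      have c1 : Multiset.countP (fun x => x % M = i) (S m) =
          Multiset.countP (fun x => x % M = i') (S m) := by
        rw [hcnt i]
        apply Multiset.countP_congr rfl
        intro x hx
        rw [hx2 x hx]
        apply propext
        have hmm : (x + h) % M = (x % M + h) % M := by rw [Nat.mod_add_mod]
        have hr : x % M < M := Nat.mod_lt _ (by positivity)
        rw [hmm, eadd _ hr, hi'val]
        split_ifs <;> omega
      have csplit : Multiset.countP (fun x => x % h = i % h) (S m) =
          Multiset.countP (fun x => x % M = i) (S m) +
          Multiset.countP (fun x => x % M = i') (S m) := by
        have hcong : Multiset.countP (fun x => x % h = i % h) (S m) =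
            Multiset.countP (fun x => x % M = i ∨ x % M = i') (S m) := by
          apply Multiset.countP_congr rfl
          intro x _
          apply propext
          have hdvd : x % M % h = x % h := Nat.mod_mod_of_dvd x ⟨2, by omega⟩
          have hr : x % M < M := Nat.mod_lt _ (by positivity)
          rw [← hdvd, emod _ hr, emod i hik, hi'val]
          split_ifs <;> omega
        have hne : i ≠ i' := by
          rw [hi'val]; split_ifs <;> omega
        have hand : Multiset.filter (fun x => x % M = i ∧ x % M = i') (S m) = 0 :=
          Multiset.filter_eq_nil.2 (fun x _ hx12 => hne (hx12.1 ▸ hx12.2 ▸ rfl))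
        rw [hcong, Multiset.countP_eq_card_filter, Multiset.countP_eq_card_filter,
          Multiset.countP_eq_card_filter, ← Multiset.card_add,
          Multiset.filter_add_filter, hand, add_zero]
      have hparity : (i % h) % 2 = 1 := by
        have he := emod i hik
        split_ifs at he <;> omega
      have hih := ih (by omega) m (i % h) (by omega) hparity (Nat.mod_lt _ (by positivity))
      have hklt : k - 1 < j := Nat.lt_two_pow_self (n := k - 1)
      have hkm : k < m := by omega
      have hpow : 2 ^ (m - (k - 1)) = 2 * 2 ^ (m - k) := by
        rw [show m - (k - 1) = (m - k) + 1 by omega, pow_succ]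
        ring
      omega


/-- Main Theorem: for `n ≥ 2^(k-1) + 2`, the residues mod `2^k` of the
`f`-values of odd words of rank `n` are equidistributed, each odd residue class
occurring `2^⌊n/2⌋ / 2^(k-1)` times. -/
theorem equidistribution_main (k n : ℕ) (hk : 1 ≤ k) (hn : 2 ^ (k - 1) + 2 ≤ n)
    (L : Finset (List ℕ))
    (hL : ∀ w : List ℕ, w ∈ L ↔ (∀ x ∈ w, x = 1 ∨ x = 2) ∧ w.sum = n ∧ Odd (fprod w)) :
    ∀ i : ℕ, Odd i → i < 2 ^ k →
      (L.filter (fun w => fprod w % 2 ^ k = i)).card = 2 ^ (n / 2) / 2 ^ (k - 1) := by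
  intro i hoi hik
  have hLW : L = (W n).filter (fun w => fprod w % 2 = 1) := by
    apply Finset.ext
    intro w
    rw [hL, Finset.mem_filter, mem_W, Nat.odd_iff]
    tauto
  rw [hLW]
  have e1 : ((Finset.filter (fun w => fprod w % 2 = 1) (W n)).filter
      (fun w => fprod w % 2 ^ k = i)).card =
      Multiset.card (Multiset.filter (fun w => fprod w % 2 ^ k = i)
        (Multiset.filter (fun w => fprod w % 2 = 1) (W n).val)) := by
    rw [Finset.card, Finset.filter_val, Finset.filter_val]
  have e2 : Multiset.card (Multiset.filter (fun w => fprod w % 2 ^ k = i)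
      (Multiset.filter (fun w => fprod w % 2 = 1) (W n).val)) =
      Multiset.countP (fun x => x % 2 ^ k = i) (Mval n) := by
    rw [Mval, Multiset.countP_map]
  rw [e1, e2, Mval_eq, countB k hk (n / 2) i (by omega) (Nat.odd_iff.1 hoi) hik]
  have hkle : k - 1 ≤ n / 2 := by
    rcases Nat.lt_or_ge k 2 with hk2 | hk2
    · omega
    · have h1 : k - 2 < 2 ^ (k - 2) := Nat.lt_two_pow_self (n := k - 2)
      have h2 : (2:ℕ) ^ (k - 1) = 2 * 2 ^ (k - 2) := by
        rw [← pow_succ']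
        congr 1
        omega
      omega
  rw [Nat.pow_div hkle (by norm_num)]
end

section
/- For n even, the multiset of f-values of odd words of rank n+1 equals the multiset of f-values of odd words of rank n; in particular their residue distributions modulo any integer coincide. -/
lemma fprod_eq (w : List ℕ) :
    fprod w = ∏ i : Fin w.length, if w.get i = 2 then (w.drop i.1).sum - 1 else 1 := by
  rw [fprod, Finset.prod_filter]

lemma fprod_cons_one (t : List ℕ) : fprod (1 :: t) = fprod t := by
  rw [fprod_eq, fprod_eq]
  simp only [List.length_cons]
  rw [Fin.prod_univ_succ]
  simp

lemma fprod_cons_two (t : List ℕ) : fprod (2 :: t) = (t.sum + 1) * fprod t := by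
  rw [fprod_eq, fprod_eq]
  simp only [List.length_cons]
  rw [Fin.prod_univ_succ]
  simp
  omega

/-- for `n` even, the multiset of `f`-values of odd words of rank `n+1`
equals that of rank `n`; in particular their residue distributions modulo any
integer coincide. -/
theorem fvalues_step_even (n : ℕ) (hn : Even n) (L L' : Finset (List ℕ))
    (hL : ∀ w : List ℕ, w ∈ L ↔ (∀ x ∈ w, x = 1 ∨ x = 2) ∧ w.sum = n ∧ Odd (fprod w))
    (hL' : ∀ w : List ℕ, w ∈ L' ↔ (∀ x ∈ w, x = 1 ∨ x = 2) ∧ w.sum = n + 1 ∧ Odd (fprod w)) :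
    L'.val.map fprod = L.val.map fprod ∧
    (∀ d : ℕ, L'.val.map (fun w => fprod w % d) = L.val.map (fun w => fprod w % d)) := by
  have key : L' = L.map ⟨fun w => 1 :: w, List.cons_injective⟩ := by
    ext w
    rw [Finset.mem_map, hL']
    constructor
    · rintro ⟨hx, hs, ho⟩
      match w with
      | [] => simp at hs
      | a :: t =>
        rcases hx a (by simp) with rfl | rfl
        · refine ⟨t, ?_, rfl⟩
          rw [hL]
          refine ⟨fun x hx' => hx x (by simp [hx']), by simp at hs; omega,
            by rwa [fprod_cons_one] at ho⟩
        · exfalso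
          rw [fprod_cons_two] at ho
          have h1 : t.sum + 1 = n := by simp at hs; omega
          have h2 : Even (t.sum + 1) := h1 ▸ hn
          rcases ho with ⟨k, hk⟩
          rcases h2 with ⟨m, hm⟩
          have he : Even ((t.sum + 1) * fprod t) := by
            rw [hm]; exact (Even.add_self m).mul_right _
          rw [hk] at he
          rcases he with ⟨j, hj⟩
          omega
    · rintro ⟨t, ht, rfl⟩
      rw [hL] at ht
      obtain ⟨hx, hs, ho⟩ := ht
      refine ⟨?_, by simp [hs, Nat.add_comm], by simpa [Function.Embedding.coeFn_mk, fprod_cons_one] using ho⟩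
      intro x hx'
      rcases List.mem_cons.mp hx' with rfl | h
      · exact Or.inl rfl
      · exact hx x h
  have hval : L'.val = L.val.map (fun w => 1 :: w) := by
    rw [key]; rfl
  have h1 : L'.val.map fprod = L.val.map fprod := by
    rw [hval, Multiset.map_map]
    exact Multiset.map_congr rfl (fun w _ => fprod_cons_one w)
  refine ⟨h1, fun d => ?_⟩
  rw [hval, Multiset.map_map]
  exact Multiset.map_congr rfl (fun w _ => by simp [Function.comp, fprod_cons_one])
end
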